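/- Let p be a prime and let Γ = ℤ_p^r be the additive topological group (product topology), with r > 1. Then lim_H e(Γ, H) = p^∞, where the limit is over open subgroups H of Γ: precisely, for every positive integer k there exists an open subgroup H₀ of Γ such that for every open subgroup H ⊆ H₀, the quotient Γ/H is finite and p^k · (exponent of Γ/H) divides the index [Γ : H]. -/
import Mathlib

open PadicInt

section Aux

variable (p : ℕ) [Fact p.Prime] (r : ℕ)

/-- The subgroup `p^n Γ` of `Γ = ℤ_p^r`. -/
noncomputable def lamSub (n : ℕ) : AddSubgroup (Fin r → ℤ_[p]) where
  carrier := {x | ∀ i, (p : ℤ_[p]) ^ n ∣ x i}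
  zero_mem' := fun i => dvd_zero _
  add_mem' := fun ha hb i => dvd_add (ha i) (hb i)
  neg_mem' := fun ha i => (ha i).neg_right

/-- Componentwise `toZModPow`. -/
noncomputable def toZPi (n : ℕ) : (Fin r → ℤ_[p]) →+ (Fin r → ZMod (p ^ n)) where
  toFun x i := PadicInt.toZModPow n (x i)
  map_zero' := by ext i; simp
  map_add' := fun a b => by ext i; simp

lemma toZPi_surjective (n : ℕ) : Function.Surjective (toZPi p r n) := by
  intro z
  haveI : NeZero (p ^ n) := ⟨pow_ne_zero _ (Fact.out : p.Prime).ne_zero⟩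
  refine ⟨fun i => ((z i).val : ℤ_[p]), ?_⟩
  ext i
  show (PadicInt.toZModPow n) (((z i).val : ℕ) : ℤ_[p]) = z i
  rw [map_natCast, ZMod.natCast_val, ZMod.cast_id]

lemma ker_toZPi (n : ℕ) : (toZPi p r n).ker = lamSub p r n := by
  ext x
  simp only [AddMonoidHom.mem_ker]
  constructor
  · intro h i
    have hx : (PadicInt.toZModPow n) (x i) = 0 := congrFun h i
    rw [← RingHom.mem_ker, PadicInt.ker_toZModPow, Ideal.mem_span_singleton] at hx
    exact hx
  · intro h
    ext i
    have : x i ∈ RingHom.ker (PadicInt.toZModPow (p := p) n) := by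
      rw [PadicInt.ker_toZModPow, Ideal.mem_span_singleton]; exact h i
    exact this

/-- The quotient by `lamSub` is `(ZMod (p^n))^r`. -/
noncomputable def lamEquiv (n : ℕ) :
    ((Fin r → ℤ_[p]) ⧸ lamSub p r n) ≃+ (Fin r → ZMod (p ^ n)) :=
  (QuotientAddGroup.quotientAddEquivOfEq (ker_toZPi p r n).symm).trans
    (QuotientAddGroup.quotientKerEquivOfSurjective _ (toZPi_surjective p r n))

lemma card_lam_quot (n : ℕ) :
    Nat.card ((Fin r → ℤ_[p]) ⧸ lamSub p r n) = p ^ (n * r) := by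
  rw [Nat.card_congr (lamEquiv p r n).toEquiv, Nat.card_pi]
  simp [Nat.card_zmod, Finset.prod_const, ← pow_mul]

lemma lam_isOpen (n : ℕ) : IsOpen ((lamSub p r n : AddSubgroup (Fin r → ℤ_[p])) :
    Set (Fin r → ℤ_[p])) := by
  apply AddSubgroup.isOpen_of_mem_nhds
  have hpos : (0 : ℝ) < (p : ℝ) ^ (-n : ℤ) := by
    apply zpow_pos
    exact_mod_cast (Fact.out : p.Prime).pos
  refine Filter.mem_of_superset (Metric.ball_mem_nhds 0 hpos) ?_
  intro x hx
  rw [mem_ball_zero_iff] at hx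
  intro i
  have h1 : ‖x i‖ ≤ ‖x‖ := norm_le_pi_norm x i
  have h2 : ‖x i‖ ≤ (p : ℝ) ^ (-n : ℤ) := le_of_lt (lt_of_le_of_lt h1 hx)
  rw [PadicInt.norm_le_pow_iff_mem_span_pow, Ideal.mem_span_singleton] at h2
  exact h2

lemma exists_lam_le {H : AddSubgroup (Fin r → ℤ_[p])}
    (hH : IsOpen (H : Set (Fin r → ℤ_[p]))) : ∃ N : ℕ, lamSub p r N ≤ H := by
  have h0 : (H : Set (Fin r → ℤ_[p])) ∈ nhds 0 := hH.mem_nhds H.zero_mem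
  obtain ⟨ε, hε, hball⟩ := Metric.mem_nhds_iff.1 h0
  have hp1 : (1 : ℝ) / p < 1 := by
    rw [div_lt_one (by exact_mod_cast (Fact.out : p.Prime).pos)]
    exact_mod_cast (Fact.out : p.Prime).one_lt
  obtain ⟨N, hN⟩ := exists_pow_lt_of_lt_one hε hp1
  refine ⟨N, fun x hx => ?_⟩
  apply hball
  rw [Metric.mem_ball, dist_zero_right]
  have hnorm : ‖x‖ ≤ (p : ℝ) ^ (-N : ℤ) := by
    apply pi_norm_le_iff_of_nonneg (le_of_lt (zpow_pos
      (by exact_mod_cast (Fact.out : p.Prime).pos) _)) |>.2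
    intro i
    rw [PadicInt.norm_le_pow_iff_mem_span_pow, Ideal.mem_span_singleton]
    exact hx i
  calc ‖x‖ ≤ (p : ℝ) ^ (-N : ℤ) := hnorm
    _ = (1 / p) ^ N := by
        rw [zpow_neg, zpow_natCast, one_div, inv_pow]
    _ < ε := hN

end Aux

/-!
STATEMENT 7: Let `p` be a prime and `Γ = ℤ_p^r` (additive, product topology), `r > 1`.
Then `lim_H e(Γ, H) = p^∞` over open subgroups `H` of `Γ`: for every `k` there is an open
subgroup `H₀` such that for every open subgroup `H ⊆ H₀`, the quotient `Γ/H` is finite and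
`p^k · (exponent of Γ/H)` divides the index `[Γ : H]`.
-/

theorem e_tendsto_infinity_of_rank_gt_one
    (p : ℕ) [Fact p.Prime] (r : ℕ) (hr : 1 < r) :
    ∀ k : ℕ, ∃ H₀ : AddSubgroup (Fin r → ℤ_[p]), IsOpen (H₀ : Set (Fin r → ℤ_[p])) ∧
      ∀ H : AddSubgroup (Fin r → ℤ_[p]), IsOpen (H : Set (Fin r → ℤ_[p])) → H ≤ H₀ →
        Finite ((Fin r → ℤ_[p]) ⧸ H) ∧
        p ^ k * AddMonoid.exponent ((Fin r → ℤ_[p]) ⧸ H) ∣ H.index := by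
  intro k
  have hp : p.Prime := Fact.out
  refine ⟨lamSub p r k, lam_isOpen p r k, fun H hHopen hle => ?_⟩
  -- finiteness
  obtain ⟨N, hN⟩ := exists_lam_le p r hHopen
  have hidx : H.index ∣ (lamSub p r N).index := AddSubgroup.index_dvd_of_le hN
  have hlamidx : (lamSub p r N).index = p ^ (N * r) := card_lam_quot p r N
  have hHidx_ne : H.index ≠ 0 := by
    intro h0
    rw [h0] at hidx
    exact pow_ne_zero _ hp.ne_zero (hlamidx ▸ Nat.eq_zero_of_zero_dvd hidx)
  have hfin : Finite ((Fin r → ℤ_[p]) ⧸ H) :=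
    Nat.finite_of_card_ne_zero hHidx_ne
  refine ⟨hfin, ?_⟩
  -- setup
  set Q := (Fin r → ℤ_[p]) ⧸ H
  haveI : Finite Q := hfin
  obtain ⟨g, hg⟩ := AddMonoid.exists_addOrderOf_eq_exponent
    (AddMonoid.ExponentExists.of_finite (G := Q))
  set C : AddSubgroup Q := AddSubgroup.zmultiples g with hC
  have hcardC : Nat.card C = AddMonoid.exponent Q := by rw [hC, Nat.card_zmultiples, hg]
  have hmul : Nat.card C * C.index = H.index := C.card_mul_index
  -- the projection to V = Γ ⧸ lamSub k
  set V := (Fin r → ℤ_[p]) ⧸ lamSub p r k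
  let φ : Q →+ V := QuotientAddGroup.map H (lamSub p r k) (AddMonoidHom.id _) hle
  have hφsurj : Function.Surjective φ := by
    intro v
    obtain ⟨x, rfl⟩ := QuotientAddGroup.mk'_surjective (lamSub p r k) v
    exact ⟨QuotientAddGroup.mk x, rfl⟩
  -- every element of V is killed by p^k
  have hVkill : ∀ v : V, (p ^ k) • v = 0 := by
    intro v
    obtain ⟨x, rfl⟩ := QuotientAddGroup.mk'_surjective (lamSub p r k) v
    rw [← map_nsmul]
    rw [QuotientAddGroup.mk'_apply, QuotientAddGroup.eq_zero_iff]
    intro i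
    have : (p ^ k • x) i = ((p : ℤ_[p]) ^ k) * x i := by
      simp [Pi.smul_apply, nsmul_eq_mul]
    rw [this]
    exact dvd_mul_right _ _
  -- the image of C in V
  set C' : AddSubgroup V := C.map φ with hC'
  have hC'z : C' = AddSubgroup.zmultiples (φ g) := by
    rw [hC', hC, AddMonoidHom.map_zmultiples]
  have hcardC'_dvd : Nat.card C' ∣ p ^ k := by
    rw [hC'z, Nat.card_zmultiples]
    exact addOrderOf_dvd_of_nsmul_eq_zero (hVkill (φ g))
  have hcardV : Nat.card V = p ^ (k * r) := card_lam_quot p r k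
  have hmulV : Nat.card C' * C'.index = p ^ (k * r) := by
    rw [← hcardV]; exact C'.card_mul_index
  -- p^k divides C'.index
  obtain ⟨j, hjk, hj⟩ := (Nat.dvd_prime_pow hp).1 hcardC'_dvd
  have hjkr : j ≤ k * r := le_trans hjk (le_trans (Nat.le_mul_of_pos_right k
    (lt_trans Nat.zero_lt_one hr)) (le_refl _))
  have hC'idx : C'.index = p ^ (k * r - j) := by
    have hpj : (p : ℕ) ^ j ≠ 0 := pow_ne_zero _ hp.ne_zero
    have hpos : 0 < Nat.card C' := hj ▸ Nat.pos_of_ne_zero hpj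
    have key : Nat.card C' * C'.index = Nat.card C' * p ^ (k * r - j) := by
      rw [hmulV, hj, ← pow_add]
      congr 1
      omega
    exact Nat.eq_of_mul_eq_mul_left hpos key
  have hpk_dvd_C'idx : p ^ k ∣ C'.index := by
    rw [hC'idx]
    apply pow_dvd_pow
    have h2k : 2 * k ≤ k * r := by
      rw [mul_comm 2 k]
      exact Nat.mul_le_mul_left k hr
    omega
  -- transfer back: C'.index ∣ C.index
  have hcomap : C ≤ C'.comap φ := AddSubgroup.le_comap_map φ C
  have h1 : (C'.comap φ).index ∣ C.index := AddSubgroup.index_dvd_of_le hcomap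
  have h2 : (C'.comap φ).index = C'.index := AddSubgroup.index_comap_of_surjective C' hφsurj
  have hpk_dvd_Cidx : p ^ k ∣ C.index := dvd_trans (h2 ▸ hpk_dvd_C'idx) h1
  -- conclude
  rw [← hmul, hcardC, mul_comm (p ^ k)]
  exact mul_dvd_mul_left _ hpk_dvd_Cidx
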